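/- Any positive-definite quadratic form g = α₁ω₁² + α₂ω₂² + α₃ω₃² (α₁,α₂,α₃ > 0) on 𝔥₃ that is diagonal in the dual basis ω₁,ω₂,ω₃ is taken by some Lie algebra automorphism of 𝔥₃ to a form ω₁² + ω₂² + λ²ω₃² with λ ≠ 0; i.e., there is an automorphism σ of 𝔥₃ with g(σx, σy) = ⟨x,y⟩_λ where ⟨·,·⟩_λ has matrix diag(1,1,λ²) in the basis X₁,X₂,X₃. -/

import Mathlib

/-- The Lie bracket of the 3-dimensional Heisenberg Lie algebra `𝔥₃` in the
basis `X₁, X₂, X₃` with `[X₁,X₂] = X₃` and `X₃` central, written in coordinates. -/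
def heisBracket (x y : Fin 3 → ℝ) : Fin 3 → ℝ :=
  ![0, 0, x 0 * y 1 - x 1 * y 0]

/-- A matrix `M` (in the basis `X₁,X₂,X₃`) is a Lie algebra automorphism of `𝔥₃`
iff it is invertible and preserves the bracket. -/
def IsHeisAut (M : Matrix (Fin 3) (Fin 3) ℝ) : Prop :=
  M.det ≠ 0 ∧ ∀ x y : Fin 3 → ℝ,
    M.mulVec (heisBracket x y) = heisBracket (M.mulVec x) (M.mulVec y)

/-- Any positive-definite diagonal form `g = α₁ω₁² + α₂ω₂² + α₃ω₃²` on `𝔥₃` is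
taken by some Lie algebra automorphism of `𝔥₃` to `ω₁² + ω₂² + λ²ω₃²` with `λ ≠ 0`. -/
theorem riemannian_normal_form (a1 a2 a3 : ℝ)
    (h1 : 0 < a1) (h2 : 0 < a2) (h3 : 0 < a3) :
    ∃ (σ : Matrix (Fin 3) (Fin 3) ℝ) (l : ℝ), IsHeisAut σ ∧ l ≠ 0 ∧
      ∀ x y : Fin 3 → ℝ,
        a1 * σ.mulVec x 0 * σ.mulVec y 0 + a2 * σ.mulVec x 1 * σ.mulVec y 1 +
            a3 * σ.mulVec x 2 * σ.mulVec y 2 =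
          x 0 * y 0 + x 1 * y 1 + l ^ 2 * (x 2 * y 2) := by
  have hs1 : (0:ℝ) < Real.sqrt a1 := Real.sqrt_pos.mpr h1
  have hs2 : (0:ℝ) < Real.sqrt a2 := Real.sqrt_pos.mpr h2
  have hs3 : (0:ℝ) < Real.sqrt a3 := Real.sqrt_pos.mpr h3
  set p := (Real.sqrt a1)⁻¹ with hp
  set q := (Real.sqrt a2)⁻¹ with hq
  have hp0 : 0 < p := inv_pos.mpr hs1
  have hq0 : 0 < q := inv_pos.mpr hs2
  have e1 : a1 * p * p = 1 := by
    rw [hp]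
    field_simp
    rw [Real.sq_sqrt h1.le]
  have e2 : a2 * q * q = 1 := by
    rw [hq]
    field_simp
    rw [Real.sq_sqrt h2.le]
  refine ⟨Matrix.diagonal ![p, q, p * q], Real.sqrt a3 * (p * q), ⟨?_, ?_⟩, ?_, ?_⟩
  · rw [Matrix.det_diagonal, Fin.prod_univ_three]
    simp only [Matrix.cons_val_zero, Matrix.cons_val_one, Matrix.head_cons,
      Matrix.cons_val_two, Matrix.tail_cons]
    positivity
  · intro x y
    funext i
    fin_cases i <;>
      simp [heisBracket, Matrix.mulVec_diagonal] <;> ring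
  · positivity
  · intro x y
    have e3 : a3 * (p * q) * (p * q) = (Real.sqrt a3 * (p * q)) ^ 2 := by
      have : Real.sqrt a3 * Real.sqrt a3 = a3 := Real.mul_self_sqrt h3.le
      nlinarith [this]
    simp only [Matrix.mulVec_diagonal, Matrix.cons_val_zero, Matrix.cons_val_one,
      Matrix.head_cons, Matrix.cons_val_two, Matrix.tail_cons]
    linear_combination (x 0 * y 0) * e1 + (x 1 * y 1) * e2 + (x 2 * y 2) * e3
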